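/- Let α ∈ [0,2) and f ∈ H. If there is B > 0 such that ‖P_{t,s}f − f*‖² ≤ B (t−s)^{−α} for all t > s, then σ_{f−f*}((−δ, δ]) ≤ A δ^α for all δ > 0, where A = ρ(α) B / 2^α and ρ(α) = inf_{x>0} x^{2−α}/sin²x. -/

import Mathlib

open MeasureTheory Real Set intervalIntegral

/-- The Fejér-type kernel. -/
noncomputable def Fker (τ x : ℝ) : ℝ := (Real.sin (τ * x / 2) / (τ * x / 2)) ^ 2

/-- `ρ(α) = inf_{x>0} x^{2-α}/sin²x` (the points where `sin x = 0`, at which the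
quotient is mathematically `+∞`, are excluded). -/
noncomputable def rho (α : ℝ) : ℝ :=
  sInf {r : ℝ | ∃ x > 0, Real.sin x ≠ 0 ∧ r = x ^ (2 - α) / Real.sin x ^ 2}

lemma Fker_nonneg (τ x : ℝ) : 0 ≤ Fker τ x := sq_nonneg _

lemma Fker_le_one (τ x : ℝ) : Fker τ x ≤ 1 := by
  unfold Fker
  rcases eq_or_ne (τ * x / 2) 0 with h | h
  · simp [h]
  · rw [← sq_abs, abs_div]
    have h1 : |Real.sin (τ * x / 2)| ≤ |τ * x / 2| := Real.abs_sin_le_abs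
    have h2 : |Real.sin (τ * x / 2)| / |τ * x / 2| ≤ 1 :=
      div_le_one_of_le₀ h1 (abs_nonneg _)
    calc (|Real.sin (τ * x / 2)| / |τ * x / 2|) ^ 2 ≤ 1 ^ 2 :=
          pow_le_pow_left₀ (by positivity) h2 2
      _ = 1 := one_pow 2

lemma Fker_abs (τ x : ℝ) : Fker τ x = (Real.sin |τ * x / 2| / |τ * x / 2|) ^ 2 := by
  unfold Fker
  rcases abs_cases (τ * x / 2) with ⟨h, _⟩ | ⟨h, _⟩
  · rw [h]
  · rw [h, Real.sin_neg, neg_div_neg_eq]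

lemma sin_div_le_sin_div {y x₀ : ℝ} (hy : 0 < y) (hyx : y ≤ x₀) (hx₀ : x₀ < π) :
    Real.sin x₀ / x₀ ≤ Real.sin y / y := by
  have hx₀0 : 0 < x₀ := lt_of_lt_of_le hy hyx
  have hb : (0:ℝ) ≤ y / x₀ := by positivity
  have ha : (0:ℝ) ≤ 1 - y / x₀ := by
    rw [sub_nonneg]; exact div_le_one_of_le₀ hyx hx₀0.le
  have hc := strictConcaveOn_sin_Icc.concaveOn.2 (x := 0) (y := x₀)
    ⟨le_rfl, Real.pi_pos.le⟩ ⟨hx₀0.le, hx₀.le⟩ ha hb (by ring)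
  have heq : (1 - y / x₀) • (0:ℝ) + (y / x₀) • x₀ = y := by
    field_simp
    simp [smul_eq_mul, hx₀0.ne']
  rw [heq, Real.sin_zero, smul_eq_mul, smul_eq_mul, mul_zero, zero_add] at hc
  rw [div_le_div_iff₀ hx₀0 hy]
  calc Real.sin x₀ * y = (y / x₀ * Real.sin x₀) * x₀ := by field_simp
    _ ≤ Real.sin y * x₀ := mul_le_mul_of_nonneg_right hc hx₀0.le

theorem stmt3
    {H : Type*} [NormedAddCommGroup H] [InnerProductSpace ℂ H] [CompleteSpace H]
    (U : ℝ → H →L[ℂ] H)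
    (hUgrp : ∀ a b : ℝ, U (a + b) = (U a).comp (U b))
    (hUiso : ∀ (τ : ℝ) (g : H), ‖U τ g‖ = ‖g‖)
    (f fstar : H)
    (hcont : Continuous fun τ : ℝ => U τ f)
    (hfix : ∀ τ : ℝ, U τ fstar = fstar)
    (horth : ∀ g : H, (∀ τ : ℝ, U τ g = g) → (inner ℂ (f - fstar) g : ℂ) = 0)
    (μ : Measure ℝ) [IsFiniteMeasure μ] (hμ0 : μ {0} = 0)
    (hrep : ∀ s t : ℝ, s < t →
      ‖(t - s)⁻¹ • (∫ τ in s..t, U τ f) - fstar‖ ^ 2 = ∫ x, Fker (t - s) x ∂μ)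
    (α : ℝ) (hα : α ∈ Set.Ico (0 : ℝ) 2)
    (B : ℝ) (hB : 0 < B)
    (hrate : ∀ s t : ℝ, s < t →
      ‖(t - s)⁻¹ • (∫ τ in s..t, U τ f) - fstar‖ ^ 2 ≤ B * (t - s) ^ (-α))
    (δ : ℝ) (hδ : 0 < δ) :
    (μ (Set.Ioc (-δ) δ)).toReal ≤ rho α * B / 2 ^ α * δ ^ α := by
  obtain ⟨hα0, hα2⟩ := hα
  set m := (μ (Set.Ioc (-δ) δ)).toReal with hm
  have hmnn : 0 ≤ m := ENNReal.toReal_nonneg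
  have hC : (0:ℝ) < B * δ ^ α / 2 ^ α := by positivity
  -- key estimate for x₀ ∈ (0, π)
  have key : ∀ x₀ : ℝ, 0 < x₀ → x₀ < π →
      m ≤ B * δ ^ α / 2 ^ α * (x₀ ^ (2 - α) / Real.sin x₀ ^ 2) := by
    intro x₀ hx₀ hx₀π
    have hsin : 0 < Real.sin x₀ := Real.sin_pos_of_pos_of_lt_pi hx₀ hx₀π
    set τ := 2 * x₀ / δ with hτdef
    have hτ : 0 < τ := by positivity
    -- integral upper bound
    have hint : ∫ x, Fker τ x ∂μ ≤ B * τ ^ (-α) := by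
      have h1 := hrep 0 τ hτ
      have h2 := hrate 0 τ hτ
      rw [sub_zero] at h1 h2
      linarith [h1 ▸ h2]
    -- integrability
    have hmeas : Measurable (Fker τ) := by
      unfold Fker
      exact ((Real.measurable_sin.comp ((measurable_const.mul measurable_id).div_const 2)).div
        ((measurable_const.mul measurable_id).div_const 2)).pow_const 2
    have hFi : Integrable (Fker τ) μ := by
      refine (integrable_const (1:ℝ)).mono' hmeas.aestronglyMeasurable (ae_of_all _ fun x => ?_)
      rw [Real.norm_eq_abs, abs_of_nonneg (Fker_nonneg _ _)]
      exact Fker_le_one _ _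
    set s : Set ℝ := Set.Ioc (-δ) δ \ {0} with hsdef
    have hs : MeasurableSet s := measurableSet_Ioc.diff (measurableSet_singleton 0)
    have hμs : μ s = μ (Set.Ioc (-δ) δ) := measure_diff_null hμ0
    set c : ℝ := (Real.sin x₀ / x₀) ^ 2 with hcdef
    have hcpos : 0 < c := by positivity
    have hpt : ∀ x ∈ s, c ≤ Fker τ x := by
      rintro x ⟨⟨hx1, hx2⟩, hx0⟩
      have hx0' : x ≠ 0 := hx0
      have hxabs : |x| ≤ δ := abs_le.mpr ⟨hx1.le, hx2⟩
      have hy0 : 0 < |τ * x / 2| := by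
        simp only [abs_pos]
        intro h
        rcases mul_eq_zero.mp (div_eq_zero_iff.mp h |>.resolve_right (by norm_num)) with h' | h'
        · exact hτ.ne' h'
        · exact hx0' h'
      have hyle : |τ * x / 2| ≤ x₀ := by
        rw [abs_div, abs_mul, abs_of_pos hτ]
        rw [abs_of_pos (by norm_num : (0:ℝ) < 2)]
        rw [hτdef]
        rw [div_le_iff₀ (by norm_num : (0:ℝ) < 2)]
        calc 2 * x₀ / δ * |x| ≤ 2 * x₀ / δ * δ := by
              apply mul_le_mul_of_nonneg_left hxabs (by positivity)
          _ = x₀ * 2 := by field_simp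
      rw [Fker_abs]
      exact pow_le_pow_left₀ (by positivity) (sin_div_le_sin_div hy0 hyle hx₀π) 2
    have hlow : c * (μ s).toReal ≤ ∫ x in s, Fker τ x ∂μ :=
      setIntegral_ge_of_const_le_real hs (measure_ne_top μ s) hpt (hFi.integrableOn)
    have hmid : ∫ x in s, Fker τ x ∂μ ≤ ∫ x, Fker τ x ∂μ :=
      setIntegral_le_integral hFi (ae_of_all _ fun x => Fker_nonneg _ _)
    have hchain : c * m ≤ B * τ ^ (-α) := by
      rw [hm, ← hμs]
      linarith
    have hmle : m ≤ B * τ ^ (-α) / c := by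
      rw [le_div_iff₀ hcpos]; linarith [hchain]
    refine hmle.trans (le_of_eq ?_)
    -- algebraic identity
    have hτrw : τ ^ (-α) = 2 ^ (-α) * x₀ ^ (-α) / δ ^ (-α) := by
      rw [hτdef, Real.div_rpow (by positivity) hδ.le, Real.mul_rpow (by norm_num) hx₀.le]
    rw [hτrw, Real.rpow_neg (by norm_num : (0:ℝ) ≤ 2), Real.rpow_neg hx₀.le,
      Real.rpow_neg hδ.le, Real.rpow_sub hx₀]
    have hx2 : x₀ ^ (2:ℝ) = x₀ ^ 2 := by
      rw [show (2:ℝ) = ((2:ℕ):ℝ) by norm_num, Real.rpow_natCast]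
    rw [hx2, hcdef]
    have h2α : (2:ℝ) ^ α ≠ 0 := by positivity
    have hxα : x₀ ^ α ≠ 0 := by positivity
    have hδα : δ ^ α ≠ 0 := by positivity
    field_simp
  -- assemble: m / C is a lower bound of the set defining rho
  set S : Set ℝ := {r : ℝ | ∃ x > 0, Real.sin x ≠ 0 ∧ r = x ^ (2 - α) / Real.sin x ^ 2} with hS
  have hπ2 : (π/2 : ℝ) ∈ Set.Ioo 0 π := ⟨by positivity, by linarith [Real.pi_pos]⟩
  have hSne : S.Nonempty := ⟨(π/2) ^ (2-α) / Real.sin (π/2) ^ 2,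
    ⟨π/2, hπ2.1, by rw [Real.sin_pi_div_two]; norm_num, rfl⟩⟩
  have hlb : ∀ r ∈ S, m ≤ B * δ ^ α / 2 ^ α * r := by
    rintro r ⟨x, hx, hsx, rfl⟩
    rcases lt_or_ge x π with hxπ | hxπ
    · exact key x hx hxπ
    · have h1 : m ≤ B * δ ^ α / 2 ^ α * ((π/2) ^ (2-α) / Real.sin (π/2) ^ 2) :=
        key (π/2) hπ2.1 hπ2.2
      rw [Real.sin_pi_div_two, one_pow, div_one] at h1
      refine h1.trans (mul_le_mul_of_nonneg_left ?_ hC.le)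
      have h2 : (π/2 : ℝ) ^ (2-α) ≤ x ^ (2-α) := by
        apply Real.rpow_le_rpow (by positivity) (by linarith) (by linarith)
      refine h2.trans ?_
      have hsq : Real.sin x ^ 2 ≤ 1 := by
        rw [← sq_abs]
        calc |Real.sin x| ^ 2 ≤ 1 ^ 2 :=
          pow_le_pow_left₀ (abs_nonneg _) (Real.abs_sin_le_one x) 2
          _ = 1 := one_pow 2
      have hsqpos : 0 < Real.sin x ^ 2 := by positivity
      calc x ^ (2-α) = x ^ (2-α) / 1 := (div_one _).symm
        _ ≤ x ^ (2-α) / Real.sin x ^ 2 := by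
            apply div_le_div_of_nonneg_left (by positivity) hsqpos hsq
  have hrho : m / (B * δ ^ α / 2 ^ α) ≤ rho α := by
    unfold rho
    refine le_csInf hSne fun r hr => ?_
    rw [div_le_iff₀ hC]
    calc m ≤ B * δ ^ α / 2 ^ α * r := hlb r hr
      _ = r * (B * δ ^ α / 2 ^ α) := by ring
  rw [div_le_iff₀ hC] at hrho
  calc m ≤ rho α * (B * δ ^ α / 2 ^ α) := hrho
    _ = rho α * B / 2 ^ α * δ ^ α := by ring
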